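/- Let X be a Binomial(m, q) random variable with 0 < q < 1/2, and define the estimator p̂ = 1/2 - (1/2)(1 - 2X/m)^{1/r} when X/m ≤ 1/2 and p̂ = 1/2 otherwise, where q = (1-(1-2p)^r)/2. Then for every ε > 0, P[|p̂ - p| > ε] → 0 as m → ∞. -/

import Mathlib

open Finset

lemma binomL1 (m : ℕ) (q : ℝ) :
    ∑ x ∈ range (m+1), (m.choose x : ℝ) * q^x * (1-q)^(m-x) = 1 := by
  have h := add_pow q (1-q) m
  have : ∑ x ∈ range (m+1), (m.choose x : ℝ) * q^x * (1-q)^(m-x)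
      = ∑ x ∈ range (m+1), q^x * (1-q)^(m-x) * (m.choose x : ℝ) :=
    Finset.sum_congr rfl fun x _ => by ring
  rw [this, ← h]
  simp

lemma binomL2 (m : ℕ) (q : ℝ) :
    ∑ x ∈ range (m+1), (x:ℝ) * ((m.choose x : ℝ) * q^x * (1-q)^(m-x)) = m * q := by
  cases m with
  | zero => simp
  | succ n =>
    rw [Finset.sum_range_succ']
    have key : ∀ j : ℕ, ((j:ℝ)+1) * ((n+1).choose (j+1) : ℝ) = ((n:ℝ)+1) * (n.choose j : ℝ) := by
      intro j
      have := Nat.add_one_mul_choose_eq n j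
      have := congrArg (Nat.cast : ℕ → ℝ) this
      push_cast at this
      linarith
    have : ∀ j ∈ range (n+1),
        ((j+1 : ℕ):ℝ) * (((n+1).choose (j+1) : ℝ) * q^(j+1) * (1-q)^(n+1-(j+1)))
        = ((n:ℝ)+1) * q * ((n.choose j : ℝ) * q^j * (1-q)^(n-j)) := by
      intro j _
      rw [Nat.succ_sub_succ]
      push_cast
      rw [show ((j:ℝ)+1) * (((n+1).choose (j+1) : ℝ) * q^(j+1) * (1-q)^(n-j))
          = (((j:ℝ)+1) * ((n+1).choose (j+1) : ℝ)) * (q^(j+1) * (1-q)^(n-j)) by ring,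
        key j]
      ring
    rw [Finset.sum_congr rfl this, ← Finset.mul_sum, binomL1]
    push_cast
    ring

lemma binomL3 (m : ℕ) (q : ℝ) :
    ∑ x ∈ range (m+1), (x:ℝ) * ((x:ℝ)-1) * ((m.choose x : ℝ) * q^x * (1-q)^(m-x))
      = m * ((m:ℝ)-1) * q^2 := by
  cases m with
  | zero => simp
  | succ n =>
    rw [Finset.sum_range_succ']
    have key : ∀ j : ℕ, ((j:ℝ)+1) * ((n+1).choose (j+1) : ℝ) = ((n:ℝ)+1) * (n.choose j : ℝ) := by
      intro j
      have := Nat.add_one_mul_choose_eq n j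
      have := congrArg (Nat.cast : ℕ → ℝ) this
      push_cast at this
      linarith
    have : ∀ j ∈ range (n+1),
        ((j+1 : ℕ):ℝ) * (((j+1:ℕ):ℝ)-1) * (((n+1).choose (j+1) : ℝ) * q^(j+1) * (1-q)^(n+1-(j+1)))
        = ((n:ℝ)+1) * q * ((j:ℝ) * ((n.choose j : ℝ) * q^j * (1-q)^(n-j))) := by
      intro j _
      rw [Nat.succ_sub_succ]
      push_cast
      rw [show ((j:ℝ)+1) * ((j:ℝ)+1-1) * (((n+1).choose (j+1) : ℝ) * q^(j+1) * (1-q)^(n-j))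
          = (((j:ℝ)+1) * ((n+1).choose (j+1) : ℝ)) * ((j:ℝ) * (q^(j+1) * (1-q)^(n-j))) by ring,
        key j]
      ring
    rw [Finset.sum_congr rfl this, ← Finset.mul_sum, binomL2]
    push_cast
    ring

lemma binomVar (m : ℕ) (q : ℝ) :
    ∑ x ∈ range (m+1), ((x:ℝ) - m*q)^2 * ((m.choose x : ℝ) * q^x * (1-q)^(m-x))
      = m * q * (1-q) := by
  have expand : ∀ x ∈ range (m+1),
      ((x:ℝ) - m*q)^2 * ((m.choose x : ℝ) * q^x * (1-q)^(m-x))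
      = (x:ℝ) * ((x:ℝ)-1) * ((m.choose x : ℝ) * q^x * (1-q)^(m-x))
        + (1 - 2*(m:ℝ)*q) * ((x:ℝ) * ((m.choose x : ℝ) * q^x * (1-q)^(m-x)))
        + ((m:ℝ)*q)^2 * ((m.choose x : ℝ) * q^x * (1-q)^(m-x)) := by
    intro x _; ring
  rw [Finset.sum_congr rfl expand]
  rw [Finset.sum_add_distrib, Finset.sum_add_distrib, ← Finset.mul_sum, ← Finset.mul_sum,
    binomL1, binomL2, binomL3]
  ring


/-- The noise-level estimate computed from a syndrome weight `x` out of `m` syndrome bits,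
with parity-check row weight `r`. -/
noncomputable def noiseEstimate (r m x : ℕ) : ℝ :=
  if (x : ℝ) / m ≤ 1 / 2 then 1 / 2 - (1 / 2) * (1 - 2 * (x : ℝ) / m) ^ ((1 : ℝ) / r)
  else 1 / 2

/-- Consistency of the instantaneous noise-level estimator: if `X` is Binomial(m, q) with
`q = (1-(1-2p)^r)/2` for `p ∈ (0,1/2)` (so `0 < q < 1/2`), and
`p̂ = 1/2 - (1/2)(1-2X/m)^(1/r)` when `X/m ≤ 1/2` and `p̂ = 1/2` otherwise, then for every
`ε > 0` the probability `P[|p̂ - p| > ε]` tends to `0` as `m → ∞`. -/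
theorem noise_estimator_consistent (r : ℕ) (hr : 1 ≤ r) (p : ℝ)
    (hp : p ∈ Set.Ioo (0:ℝ) (1 / 2)) (ε : ℝ) (hε : 0 < ε) :
    Filter.Tendsto
      (fun m : ℕ =>
        ∑ x ∈ Finset.range (m + 1),
          if ε < |noiseEstimate r m x - p| then
            (m.choose x : ℝ) * ((1 - (1 - 2 * p) ^ r) / 2) ^ x
              * (1 - (1 - (1 - 2 * p) ^ r) / 2) ^ (m - x)
          else 0)
      Filter.atTop (nhds 0) := by
  obtain ⟨hp0, hp2⟩ := hp
  set q : ℝ := (1 - (1 - 2 * p) ^ r) / 2 with hqdef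
  have h12p : 0 < 1 - 2*p := by linarith
  have h12p1 : 1 - 2*p < 1 := by linarith
  have hpowpos : 0 < (1 - 2*p)^r := pow_pos h12p r
  have hpowlt : (1 - 2*p)^r < 1 :=
    pow_lt_one₀ (le_of_lt h12p) h12p1 (by omega)
  have hq0 : 0 < q := by rw [hqdef]; linarith
  have hq2 : q < 1/2 := by rw [hqdef]; linarith
  have hq1 : 1 - q > 0 := by linarith
  have hrR : (0:ℝ) < r := by exact_mod_cast hr
  -- the continuous version of the estimator
  set h : ℝ → ℝ := fun y => 1/2 - (1/2) * (1 - 2*y) ^ ((1:ℝ)/r) with hhdef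
  have hhq : h q = p := by
    have h2q : 1 - 2*q = (1 - 2*p)^r := by rw [hqdef]; ring
    have : ((1 - 2*p)^r : ℝ) ^ ((1:ℝ)/r) = 1 - 2*p := by
      rw [← Real.rpow_natCast (1-2*p) r, ← Real.rpow_mul (le_of_lt h12p),
        mul_one_div_cancel (ne_of_gt hrR), Real.rpow_one]
    rw [hhdef]
    simp only [h2q, this]
    ring
  have hcont : ContinuousAt h q := by
    apply ContinuousAt.sub continuousAt_const
    apply ContinuousAt.mul continuousAt_const
    have hbase : ContinuousAt (fun y : ℝ => 1 - 2*y) q := by fun_prop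
    exact (Real.continuousAt_rpow_const _ _ (Or.inr (by positivity))).comp hbase
  -- get δ from continuity
  rw [Metric.continuousAt_iff] at hcont
  obtain ⟨δ₀, hδ₀, hδ₀c⟩ := hcont ε hε
  set δ : ℝ := min δ₀ (1/2 - q) with hδdef
  have hδpos : 0 < δ := lt_min hδ₀ (by linarith)
  -- key implication: if the estimator is far, then x/m is far from q
  have key : ∀ m x : ℕ, 0 < m → ε < |noiseEstimate r m x - p| → δ ≤ |(x:ℝ)/m - q| := by
    intro m x hm hfar
    by_contra hclose
    push_neg at hclose
    have hy2 : (x:ℝ)/m < 1/2 := by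
      have := abs_lt.mp hclose
      have : (x:ℝ)/m - q < δ := this.2
      have : δ ≤ 1/2 - q := min_le_right _ _
      cases abs_lt.mp hclose with
      | intro h1 h2 => linarith [min_le_right δ₀ (1/2 - q)]
    have hEst : noiseEstimate r m x = h ((x:ℝ)/m) := by
      rw [noiseEstimate, if_pos (le_of_lt hy2), hhdef]
      have : 2 * (x:ℝ) / m = 2 * ((x:ℝ)/m) := by ring
      rw [this]
    have hdist : dist ((x:ℝ)/m) q < δ₀ :=
      lt_of_lt_of_le (by rwa [Real.dist_eq]) (min_le_left _ _)
    have := hδ₀c hdist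
    rw [Real.dist_eq, hhq] at this
    rw [hEst] at hfar
    linarith [this, hfar]
  -- nonnegativity of pmf
  have hpmf : ∀ m x : ℕ, 0 ≤ (m.choose x : ℝ) * q ^ x * (1 - q) ^ (m - x) := by
    intro m x
    positivity
  -- Chebyshev bound for m ≥ 1
  have cheb : ∀ m : ℕ, 1 ≤ m →
      (∑ x ∈ Finset.range (m + 1),
        if ε < |noiseEstimate r m x - p| then
          (m.choose x : ℝ) * q ^ x * (1 - q) ^ (m - x) else 0)
      ≤ q * (1-q) / δ^2 * (1/m) := by
    intro m hm
    have hmR : (0:ℝ) < m := by exact_mod_cast hm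
    have step : ∀ x ∈ range (m+1),
        (if ε < |noiseEstimate r m x - p| then
          (m.choose x : ℝ) * q ^ x * (1 - q) ^ (m - x) else 0)
        ≤ ((x:ℝ) - m*q)^2 / ((m:ℝ)*δ)^2 * ((m.choose x : ℝ) * q ^ x * (1 - q) ^ (m - x)) := by
      intro x _
      by_cases hc : ε < |noiseEstimate r m x - p|
      · rw [if_pos hc]
        have h1 : δ ≤ |(x:ℝ)/m - q| := key m x hm hc
        have h2 : (m:ℝ)*δ ≤ |(x:ℝ) - m*q| := by
          have : (m:ℝ) * |(x:ℝ)/m - q| = |(x:ℝ) - m*q| := by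
            rw [← abs_of_pos hmR, ← abs_mul]
            congr 1
            field_simp
            rw [abs_of_pos hmR]
          calc (m:ℝ)*δ ≤ (m:ℝ) * |(x:ℝ)/m - q| := by nlinarith
            _ = |(x:ℝ) - m*q| := this
        have h3 : ((m:ℝ)*δ)^2 ≤ ((x:ℝ) - m*q)^2 := by
          rw [← sq_abs ((x:ℝ) - m*q)]
          have hmd : 0 ≤ (m:ℝ)*δ := by positivity
          nlinarith [abs_nonneg ((x:ℝ) - m*q)]
        have h4 : (1:ℝ) ≤ ((x:ℝ) - m*q)^2 / ((m:ℝ)*δ)^2 := by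
          rw [le_div_iff₀ (by positivity)]
          linarith
        nlinarith [hpmf m x, h4]
      · rw [if_neg hc]
        positivity
    calc (∑ x ∈ range (m+1), if ε < |noiseEstimate r m x - p| then
            (m.choose x : ℝ) * q ^ x * (1 - q) ^ (m - x) else 0)
        ≤ ∑ x ∈ range (m+1),
            ((x:ℝ) - m*q)^2 / ((m:ℝ)*δ)^2 * ((m.choose x : ℝ) * q ^ x * (1 - q) ^ (m - x)) :=
          Finset.sum_le_sum step
      _ = (1/((m:ℝ)*δ)^2) * ∑ x ∈ range (m+1),
            ((x:ℝ) - m*q)^2 * ((m.choose x : ℝ) * q ^ x * (1 - q) ^ (m - x)) := by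
          rw [Finset.mul_sum]
          exact Finset.sum_congr rfl fun x _ => by ring
      _ = (1/((m:ℝ)*δ)^2) * ((m:ℝ) * q * (1-q)) := by rw [binomVar]
      _ = q * (1-q) / δ^2 * (1/m) := by field_simp
  -- squeeze
  have hlim : Filter.Tendsto (fun m : ℕ => q * (1-q) / δ^2 * (1/(m:ℝ)))
      Filter.atTop (nhds 0) := by
    have := tendsto_one_div_atTop_nhds_zero_nat (𝕜 := ℝ)
    have := this.const_mul (q * (1-q) / δ^2)
    simpa using this
  apply squeeze_zero_norm' _ hlim
  filter_upwards [Filter.eventually_ge_atTop 1] with m hm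
  have hnn : 0 ≤ ∑ x ∈ Finset.range (m + 1),
      if ε < |noiseEstimate r m x - p| then
        (m.choose x : ℝ) * q ^ x * (1 - q) ^ (m - x) else 0 := by
    apply Finset.sum_nonneg
    intro x _
    by_cases hc : ε < |noiseEstimate r m x - p|
    · rw [if_pos hc]; exact hpmf m x
    · rw [if_neg hc]
  rw [Real.norm_eq_abs, abs_of_nonneg hnn]
  exact cheb m hm
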